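/- Fix 0 < r < ∞ and 0 < δ < 1, and for R > r define φ^{(r,R)} : ℝ → ℝ by φ^{(r,R)}(x) = 1 for |x| ≤ r, φ^{(r,R)}(x) = 1 - log(1+|x|-r)/log(1+R-r) for r < |x| < R, and φ^{(r,R)}(x) = 0 for |x| ≥ R. Let J_{R,1} denote the integral of [(φ^{(r,R)}(x) - φ^{(r,R)}(y))/(x-y)]² · [1 + (log(1+|x-y|))^δ] over the domain D_1(r,R) = {(x,y) ∈ ℝ² : r < |x| < R and r < |y| < R}. Then there exist constants C > 0 and R_0 > r such that for all R ≥ R_0, J_{R,1} ≤ C/(log R)^{1-δ}; in particular J_{R,1} → 0 as R → ∞. -/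

import Mathlib

open MeasureTheory

/-- The cutoff function `φ^{(r,R)}` of the paper: `1` on `[-r,r]`,
`1 - log(1+|x|-r)/log(1+R-r)` for `r < |x| < R`, and `0` for `|x| ≥ R`. -/
noncomputable def phiCut (r R x : ℝ) : ℝ :=
  if |x| ≤ r then 1
  else if |x| < R then 1 - Real.log (1 + |x| - r) / Real.log (1 + R - r)
  else 0

/-- The variance-type integral
`∫∫_D [(φ^{(r,R)}(x)-φ^{(r,R)}(y))/(x-y)]² [1 + log^δ(1+|x-y|)] dx dy`
over a domain `D ⊆ ℝ²` (the integrand vanishes on the diagonal, since `0/0 = 0`). -/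
noncomputable def Jint (r R δ : ℝ) (D : Set (ℝ × ℝ)) : ENNReal :=
  ∫⁻ p in D, ENNReal.ofReal
    (((phiCut r R p.1 - phiCut r R p.2) / (p.1 - p.2)) ^ 2 *
      (1 + Real.log (1 + |p.1 - p.2|) ^ δ))

open Set
open scoped ENNReal


lemma log2num : Real.log 2 ^ 2 + 2 * Real.log 2 + 2 ≤ 4 := by
  have h := Real.log_two_lt_d9
  have h0 := Real.log_nonneg (by norm_num : (1:ℝ) ≤ 2)
  nlinarith

lemma log_abs_sub (u a : ℝ) (hu : 0 < u) (ha : 0 < a) (h : a/2 ≤ u) :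
    |Real.log u - Real.log a| ≤ 2/a * |u - a| := by
  rcases le_total a u with hle | hle
  · have hlog : Real.log a ≤ Real.log u := Real.log_le_log ha hle
    rw [abs_of_nonneg (by linarith), abs_of_nonneg (by linarith)]
    have h1 : Real.log u - Real.log a = Real.log (u / a) := (Real.log_div hu.ne' ha.ne').symm
    have h2 : Real.log (u / a) ≤ u / a - 1 := Real.log_le_sub_one_of_pos (by positivity)
    have h3 : u / a - 1 ≤ 2/a * (u - a) := by
      rw [div_sub_one ha.ne', div_mul_eq_mul_div 2 a (u-a), div_le_div_iff₀ ha ha]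
      nlinarith
    linarith [h1 ▸ h2]
  · have hlog : Real.log u ≤ Real.log a := Real.log_le_log hu hle
    rw [abs_of_nonpos (by linarith), abs_of_nonpos (by linarith)]
    have h1 : Real.log a - Real.log u = Real.log (a / u) := (Real.log_div ha.ne' hu.ne').symm
    have h2 : Real.log (a / u) ≤ a / u - 1 := Real.log_le_sub_one_of_pos (by positivity)
    have h3 : a / u - 1 ≤ 2/a * (a - u) := by
      rw [div_sub_one hu.ne', div_mul_eq_mul_div 2 a (a-u), div_le_div_iff₀ hu ha]
      nlinarith
    have h4 := h1 ▸ h2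
    simp only [neg_sub]
    linarith

lemma lint_Ioo (g : ℝ → ℝ) (a b : ℝ) (hab : a ≤ b) (hg : ContinuousOn g (Icc a b))
    (hnn : ∀ u ∈ Ioc a b, 0 ≤ g u) :
    ∫⁻ u in Ioo a b, ENNReal.ofReal (g u) = ENNReal.ofReal (∫ u in a..b, g u) := by
  rw [setLIntegral_congr Ioo_ae_eq_Ioc, intervalIntegral.integral_of_le hab,
    ← ofReal_integral_eq_lintegral_ofReal]
  · exact (hg.integrableOn_Icc).mono_set Ioc_subset_Icc_self
  · exact (ae_restrict_iff' measurableSet_Ioc).2 (Filter.Eventually.of_forall hnn)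

lemma intB1 (a : ℝ) (ha : 1 < a) :
    ∫⁻ u in Ioo 1 (a/2), ENNReal.ofReal ((Real.log a - Real.log u)^2) ≤ ENNReal.ofReal (2*a) := by
  rcases le_or_gt (a/2) 1 with h | h
  · rw [Ioo_eq_empty (by linarith), Measure.restrict_empty, lintegral_zero_measure]
    positivity
  · set Φ : ℝ → ℝ := fun u => u * ((Real.log a - Real.log u)^2 + 2*(Real.log a - Real.log u) + 2) with hΦ
    have hderiv : ∀ u ∈ Icc (1:ℝ) (a/2), HasDerivAt Φ ((Real.log a - Real.log u)^2) u := by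
      intro u hu
      have hu0 : (0:ℝ) < u := lt_of_lt_of_le one_pos hu.1
      have hlog : HasDerivAt (fun u : ℝ => Real.log a - Real.log u) (-u⁻¹) u := by
        exact (Real.hasDerivAt_log hu0.ne').const_sub (Real.log a)
      have hg : HasDerivAt (fun u : ℝ => (Real.log a - Real.log u)^2 + 2*(Real.log a - Real.log u) + 2)
          (2 * (Real.log a - Real.log u) ^ 1 * (-u⁻¹) + 2 * (-u⁻¹)) u := by
        exact ((hlog.pow 2).add ((hlog.const_mul 2))).add_const 2
      have h2 := (hasDerivAt_id u).mul hg
      refine h2.congr_deriv ?_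
      simp only [id]
      field_simp
      ring
    have hcont : ContinuousOn (fun u : ℝ => (Real.log a - Real.log u)^2) (Icc 1 (a/2)) := by
      apply ContinuousOn.pow
      exact continuousOn_const.sub (Real.continuousOn_log.mono (fun u hu => by
        simp only [mem_compl_iff, mem_singleton_iff]; intro h0; rw [h0] at hu; exact absurd hu.1 (by norm_num)))
    have hFTC : ∫ u in (1:ℝ)..(a/2), (Real.log a - Real.log u)^2 = Φ (a/2) - Φ 1 := by
      apply intervalIntegral.integral_eq_sub_of_hasDerivAt
      · intro u hu
        exact hderiv u (by rwa [uIcc_of_le h.le] at hu)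
      · exact (hcont.mono (by rw [uIcc_of_le h.le])).intervalIntegrable
    rw [lint_Ioo _ _ _ h.le hcont (fun u _ => by positivity), hFTC]
    apply ENNReal.ofReal_le_ofReal
    have hΦ1 : 0 ≤ Φ 1 := by
      have : Real.log 1 = 0 := Real.log_one
      have hla : 0 ≤ Real.log a := Real.log_nonneg ha.le
      simp only [hΦ, this, sub_zero, one_mul]
      nlinarith
    have hΦa : Φ (a/2) ≤ 2*a := by
      have h2 : Real.log (a/2) = Real.log a - Real.log 2 := Real.log_div (by linarith) (by norm_num)
      have := log2num
      simp only [hΦ, h2]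
      have ha2 : (0:ℝ) < a/2 := by linarith
      nlinarith [Real.log_nonneg (by norm_num : (1:ℝ) ≤ 2)]
    linarith
lemma lint_Ioc (g : ℝ → ℝ) (a b : ℝ) (hab : a ≤ b) (hg : ContinuousOn g (Icc a b))
    (hnn : ∀ u ∈ Ioc a b, 0 ≤ g u) :
    ∫⁻ u in Ioc a b, ENNReal.ofReal (g u) = ENNReal.ofReal (∫ u in a..b, g u) := by
  rw [intervalIntegral.integral_of_le hab, ← ofReal_integral_eq_lintegral_ofReal]
  · exact (hg.integrableOn_Icc).mono_set Ioc_subset_Icc_self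
  · exact (ae_restrict_iff' measurableSet_Ioc).2 (Filter.Eventually.of_forall hnn)

lemma intB2 (a M : ℝ) (ha : 1 < a) (hM : 2*a ≤ M) :
    ∫⁻ u in Ioc (2*a) M, ENNReal.ofReal ((Real.log u - Real.log a)^2 / u^2) ≤
      ENNReal.ofReal (2/a) := by
  set Ψ : ℝ → ℝ := fun u => -(((Real.log u - Real.log a)^2 + 2*(Real.log u - Real.log a) + 2)/u) with hΨ
  have hderiv : ∀ u ∈ Icc (2*a) M, HasDerivAt Ψ ((Real.log u - Real.log a)^2 / u^2) u := by
    intro u hu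
    have hu0 : (0:ℝ) < u := lt_of_lt_of_le (by linarith) hu.1
    have hlog : HasDerivAt (fun u : ℝ => Real.log u - Real.log a) (u⁻¹) u := by
      exact (Real.hasDerivAt_log hu0.ne').sub_const (Real.log a)
    have hg : HasDerivAt (fun u : ℝ => (Real.log u - Real.log a)^2 + 2*(Real.log u - Real.log a) + 2)
        (2 * (Real.log u - Real.log a) ^ 1 * u⁻¹ + 2 * u⁻¹) u :=
      ((hlog.pow 2).add (hlog.const_mul 2)).add_const 2
    have h2 := (hg.div (hasDerivAt_id u) hu0.ne').neg
    refine h2.congr_deriv ?_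
    simp only [id]
    field_simp
    try ring
  have hcont : ContinuousOn (fun u : ℝ => (Real.log u - Real.log a)^2 / u^2) (Icc (2*a) M) := by
    apply ContinuousOn.div
    · exact ((Real.continuousOn_log.mono (fun u hu => by
        simp only [mem_compl_iff, mem_singleton_iff]; intro h0; rw [h0] at hu
        have : (0:ℝ) < 2*a := by linarith
        exact absurd hu.1 (by linarith))).sub continuousOn_const).pow 2
    · exact (continuousOn_id.pow 2)
    · intro u hu
      have : (0:ℝ) < u := lt_of_lt_of_le (by linarith) hu.1
      positivity
  have hFTC : ∫ u in (2*a)..M, (Real.log u - Real.log a)^2/u^2 = Ψ M - Ψ (2*a) := by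
    apply intervalIntegral.integral_eq_sub_of_hasDerivAt
    · intro u hu; exact hderiv u (by rwa [uIcc_of_le hM] at hu)
    · exact (hcont.mono (by rw [uIcc_of_le hM])).intervalIntegrable
  rw [lint_Ioc _ _ _ hM hcont (fun u hu => by positivity), hFTC]
  apply ENNReal.ofReal_le_ofReal
  have hΨM : Ψ M ≤ 0 := by
    have hM0 : (0:ℝ) < M := lt_of_lt_of_le (by linarith) hM
    have : 0 ≤ (Real.log M - Real.log a)^2 + 2*(Real.log M - Real.log a) + 2 := by nlinarith
    simp only [hΨ]
    rw [neg_nonpos]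
    positivity
  have hΨ2a : -Ψ (2*a) ≤ 2/a := by
    have h2 : Real.log (2*a) = Real.log 2 + Real.log a := Real.log_mul (by norm_num) (by linarith)
    have := log2num
    simp only [hΨ, h2, neg_neg]
    rw [div_le_div_iff₀ (by linarith) (by linarith)]
    nlinarith
  simp only [hΨ] at hΨM hΨ2a ⊢
  linarith

lemma key1D (M a : ℝ) (ha1 : 1 < a) (haM : a < M) :
    ∫⁻ u in Ioo 1 M, ENNReal.ofReal (((Real.log u - Real.log a)/(u - a))^2) ≤
      ENNReal.ofReal (32/a) := by
  have ha0 : (0:ℝ) < a := by linarith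
  set F : ℝ → ℝ≥0∞ := fun u => ENNReal.ofReal (((Real.log u - Real.log a)/(u - a))^2) with hF
  have hsub : Ioo (1:ℝ) M ⊆ (Ioo 1 (a/2) ∪ (Icc (a/2) (2*a) ∪ Ioc (2*a) M)) := by
    intro u hu
    rcases lt_or_ge u (a/2) with h | h
    · exact Or.inl ⟨hu.1, h⟩
    · rcases le_or_gt u (2*a) with h2 | h2
      · exact Or.inr (Or.inl ⟨h, h2⟩)
      · exact Or.inr (Or.inr ⟨h2, hu.2.le⟩)
  calc ∫⁻ u in Ioo 1 M, F u
      ≤ ∫⁻ u in (Ioo 1 (a/2) ∪ (Icc (a/2) (2*a) ∪ Ioc (2*a) M)), F u :=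
        lintegral_mono_set hsub
    _ ≤ (∫⁻ u in Ioo 1 (a/2), F u) + ((∫⁻ u in Icc (a/2) (2*a), F u) +
          (∫⁻ u in Ioc (2*a) M, F u)) := by
        refine le_trans (lintegral_union_le _ _ _) ?_
        exact add_le_add le_rfl (lintegral_union_le _ _ _)
    _ ≤ ENNReal.ofReal (8/a) + (ENNReal.ofReal (6/a) + ENNReal.ofReal (8/a)) := by
        gcongr
        · -- B1 piece
          have hpt : ∀ u ∈ Ioo (1:ℝ) (a/2), F u ≤
              ENNReal.ofReal (4/a^2 * (Real.log a - Real.log u)^2) := by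
            intro u hu
            apply ENNReal.ofReal_le_ofReal
            have hu0 : (0:ℝ) < u := lt_trans one_pos hu.1
            have h1 : (u - a)^2 ≥ (a/2)^2 := by nlinarith [hu.2]
            have h2 : ((Real.log u - Real.log a)/(u - a))^2
                = (Real.log a - Real.log u)^2 / (u-a)^2 := by
              rw [div_pow]; ring_nf
            rw [h2]
            have ha2 : (0:ℝ) < (a/2)^2 := by positivity
            calc (Real.log a - Real.log u)^2 / (u-a)^2
                ≤ (Real.log a - Real.log u)^2 / ((a/2)^2) := by
                  gcongr
              _ = 4/a^2 * (Real.log a - Real.log u)^2 := by field_simp; ring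
          calc ∫⁻ u in Ioo 1 (a/2), F u
              ≤ ∫⁻ u in Ioo 1 (a/2), ENNReal.ofReal (4/a^2 * (Real.log a - Real.log u)^2) :=
              setLIntegral_mono (ENNReal.measurable_ofReal.comp (((measurable_const.sub Real.measurable_log).pow_const 2).const_mul _)) hpt
            _ = ENNReal.ofReal (4/a^2) * ∫⁻ u in Ioo 1 (a/2),
                  ENNReal.ofReal ((Real.log a - Real.log u)^2) := by
                rw [← lintegral_const_mul' _ _ ENNReal.ofReal_ne_top]
                congr 1; ext u
                rw [← ENNReal.ofReal_mul (by positivity)]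
            _ ≤ ENNReal.ofReal (4/a^2) * ENNReal.ofReal (2*a) := by
                gcongr; exact intB1 a ha1
            _ = ENNReal.ofReal (8/a) := by
                rw [← ENNReal.ofReal_mul (by positivity)]
                congr 1; field_simp; ring
        · -- A piece
          have hpt : ∀ u ∈ Icc (a/2) (2*a), F u ≤ ENNReal.ofReal (4/a^2) := by
            intro u hu
            apply ENNReal.ofReal_le_ofReal
            have hu0 : (0:ℝ) < u := lt_of_lt_of_le (by linarith) hu.1
            rcases eq_or_ne u a with rfl | hne
            · simp [sub_self]; positivity
            · have habs := log_abs_sub u a hu0 ha0 hu.1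
              have h1 : (Real.log u - Real.log a)^2 ≤ (2/a)^2 * (u-a)^2 := by
                have := sq_abs (Real.log u - Real.log a)
                have h2 : |Real.log u - Real.log a|^2 ≤ (2/a * |u-a|)^2 := by
                  apply pow_le_pow_left₀ (abs_nonneg _) habs
                rw [sq_abs] at h2
                rw [mul_pow, sq_abs] at h2
                exact h2
              have hua : (0:ℝ) < (u-a)^2 := lt_of_le_of_ne (sq_nonneg _) (Ne.symm (pow_ne_zero 2 (sub_ne_zero.2 hne)))
              rw [div_pow, div_le_iff₀ hua]
              calc (Real.log u - Real.log a)^2 ≤ (2/a)^2 * (u-a)^2 := h1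
                _ = 4/a^2 * (u-a)^2 := by rw [div_pow]; norm_num
          calc ∫⁻ u in Icc (a/2) (2*a), F u
              ≤ ∫⁻ _u in Icc (a/2) (2*a), ENNReal.ofReal (4/a^2) :=
                setLIntegral_mono measurable_const hpt
            _ = ENNReal.ofReal (4/a^2) * volume (Icc (a/2) (2*a)) := setLIntegral_const _ _
            _ = ENNReal.ofReal (4/a^2) * ENNReal.ofReal (2*a - a/2) := by rw [Real.volume_Icc]
            _ ≤ ENNReal.ofReal (6/a) := by
                rw [← ENNReal.ofReal_mul (by positivity)]
                apply ENNReal.ofReal_le_ofReal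
                rw [div_mul_eq_mul_div, div_le_div_iff₀ (by positivity) ha0]
                ring_nf
                nlinarith
        · -- B2 piece
          rcases le_or_gt (2*a) M with hM2 | hM2
          · have hpt : ∀ u ∈ Ioc (2*a) M, F u ≤
                ENNReal.ofReal (4 * ((Real.log u - Real.log a)^2 / u^2)) := by
              intro u hu
              apply ENNReal.ofReal_le_ofReal
              have hu0 : (0:ℝ) < u := lt_trans (by linarith) hu.1
              have h1 : (u - a)^2 ≥ (u/2)^2 := by nlinarith [hu.1]
              have hu2 : (0:ℝ) < (u/2)^2 := by positivity
              rw [div_pow]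
              calc (Real.log u - Real.log a)^2 / (u-a)^2
                  ≤ (Real.log u - Real.log a)^2 / ((u/2)^2) := by
                    gcongr
                _ = 4 * ((Real.log u - Real.log a)^2 / u^2) := by field_simp; ring
            calc ∫⁻ u in Ioc (2*a) M, F u
                ≤ ∫⁻ u in Ioc (2*a) M,
                    ENNReal.ofReal (4 * ((Real.log u - Real.log a)^2 / u^2)) :=
                  setLIntegral_mono (ENNReal.measurable_ofReal.comp ((((Real.measurable_log.sub measurable_const).pow_const 2).div (measurable_id.pow_const 2)).const_mul _)) hpt
              _ = ENNReal.ofReal 4 * ∫⁻ u in Ioc (2*a) M,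
                    ENNReal.ofReal ((Real.log u - Real.log a)^2 / u^2) := by
                  rw [← lintegral_const_mul' _ _ ENNReal.ofReal_ne_top]
                  congr 1; ext u
                  rw [← ENNReal.ofReal_mul (by positivity)]
              _ ≤ ENNReal.ofReal 4 * ENNReal.ofReal (2/a) := by
                  gcongr; exact intB2 a M ha1 hM2
              _ = ENNReal.ofReal (8/a) := by
                  rw [← ENNReal.ofReal_mul (by positivity)]
                  congr 1; field_simp; ring
          · rw [Ioc_eq_empty (by linarith), Measure.restrict_empty, lintegral_zero_measure]
            positivity
    _ ≤ ENNReal.ofReal (32/a) := by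
        rw [← ENNReal.ofReal_add (by positivity) (by positivity),
          ← ENNReal.ofReal_add (by positivity) (by positivity)]
        apply ENNReal.ofReal_le_ofReal
        rw [← add_div, ← add_div, div_le_div_iff₀ ha0 ha0]
        nlinarith

lemma annulus_eq (r R : ℝ) (hr : 0 < r) :
    {y : ℝ | r < |y| ∧ |y| < R} = Ioo (-R) (-r) ∪ Ioo r R := by
  ext y
  simp only [mem_setOf_eq, mem_union, mem_Ioo]
  rcases le_or_gt 0 y with h | h
  · rw [abs_of_nonneg h]
    constructor
    · rintro ⟨h1, h2⟩; exact Or.inr ⟨h1, h2⟩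
    · rintro (⟨h1, h2⟩ | ⟨h1, h2⟩) <;> constructor <;> linarith
  · rw [abs_of_neg h]
    constructor
    · rintro ⟨h1, h2⟩; exact Or.inl ⟨by linarith, by linarith⟩
    · rintro (⟨h1, h2⟩ | ⟨h1, h2⟩) <;> constructor <;> linarith

lemma absReduce (r R : ℝ) (hr : 0 < r) (h : ℝ → ℝ≥0∞) (hm : Measurable h) :
    ∫⁻ y in {y : ℝ | r < |y| ∧ |y| < R}, h |y| = 2 * ∫⁻ t in Ioo r R, h t := by
  rw [annulus_eq r R hr, lintegral_union measurableSet_Ioo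
    (by
      rw [Set.disjoint_left]
      rintro y ⟨h1, h2⟩ ⟨h3, h4⟩
      linarith)]
  have hneg : ∫⁻ y in Ioo (-R) (-r), h |y| = ∫⁻ t in Ioo r R, h t := by
    have hmap : Measure.map Neg.neg (volume : Measure ℝ) = volume :=
      (Measure.measurePreserving_neg _).map_eq
    calc ∫⁻ y in Ioo (-R) (-r), h |y|
        = ∫⁻ y in Ioo (-R) (-r), h |y| ∂(Measure.map Neg.neg volume) := by rw [hmap]
      _ = ∫⁻ x in Neg.neg ⁻¹' Ioo (-R) (-r), h |(-x)| :=
          setLIntegral_map measurableSet_Ioo (hm.comp measurable_abs) measurable_neg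
      _ = ∫⁻ x in Ioo r R, h |x| := by
          have hpre : (Neg.neg ⁻¹' Ioo (-R) (-r) : Set ℝ) = Ioo r R := by
            ext x
            simp only [mem_preimage, mem_Ioo]
            constructor <;> rintro ⟨h1, h2⟩ <;> exact ⟨by linarith, by linarith⟩
          rw [hpre]
          simp_rw [abs_neg]
      _ = ∫⁻ t in Ioo r R, h t := by
          apply setLIntegral_congr_fun measurableSet_Ioo
          exact fun x hx => by rw [abs_of_pos (lt_trans hr hx.1)]
  have hpos : ∫⁻ y in Ioo r R, h |y| = ∫⁻ t in Ioo r R, h t := by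
    apply setLIntegral_congr_fun measurableSet_Ioo
    exact fun x hx => by rw [abs_of_pos (lt_trans hr hx.1)]
  rw [hneg, hpos, two_mul]

lemma shiftReduce (c a b : ℝ) (h : ℝ → ℝ≥0∞) (hm : Measurable h) :
    ∫⁻ t in Ioo a b, h t = ∫⁻ v in Ioo (a - c) (b - c), h (v + c) := by
  have hmap : Measure.map (· + c) (volume : Measure ℝ) = volume :=
    map_add_right_eq_self volume c
  calc ∫⁻ t in Ioo a b, h t
      = ∫⁻ t in Ioo a b, h t ∂(Measure.map (· + c) volume) := by rw [hmap]
    _ = ∫⁻ v in (· + c) ⁻¹' Ioo a b, h (v + c) :=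
        setLIntegral_map measurableSet_Ioo hm (measurable_add_const c)
    _ = ∫⁻ v in Ioo (a - c) (b - c), h (v + c) := by
        have hpre : ((· + c) ⁻¹' Ioo a b : Set ℝ) = Ioo (a - c) (b - c) := by
          ext v
          simp only [mem_preimage, mem_Ioo]
          constructor <;> rintro ⟨h1, h2⟩ <;> exact ⟨by linarith, by linarith⟩
        rw [hpre]

lemma prodSplit (A : Set ℝ) (f : ℝ × ℝ → ℝ≥0∞) (hf : Measurable f) :
    ∫⁻ p in A ×ˢ A, f p = ∫⁻ x in A, ∫⁻ y in A, f (x, y) := by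
  rw [Measure.volume_eq_prod, ← Measure.prod_restrict,
    lintegral_prod _ hf.aemeasurable]

lemma intOne (M c : ℝ) (hM : 1 < M) (hc : 0 ≤ c) :
    ∫⁻ v in Ioo 1 M, ENNReal.ofReal (c / v) = ENNReal.ofReal (c * Real.log M) := by
  have hcont : ContinuousOn (fun v : ℝ => c / v) (Icc 1 M) :=
    continuousOn_const.div continuousOn_id (fun v hv => by
      have : (0:ℝ) < v := lt_of_lt_of_le one_pos hv.1
      exact this.ne')
  rw [setLIntegral_congr Ioo_ae_eq_Ioc,
    ← ofReal_integral_eq_lintegral_ofReal ((hcont.integrableOn_Icc).mono_set Ioc_subset_Icc_self)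
      ((ae_restrict_iff' measurableSet_Ioc).2 (Filter.Eventually.of_forall fun v hv => by
        have : (0:ℝ) < v := lt_of_lt_of_le one_pos hv.1.le
        positivity))]
  congr 1
  rw [← intervalIntegral.integral_of_le hM.le]
  have heq : ∀ v : ℝ, c / v = c * v⁻¹ := fun v => div_eq_mul_inv c v
  simp_rw [heq]
  rw [intervalIntegral.integral_const_mul, integral_inv (by
    simp only [uIcc_of_le hM.le, mem_Icc, not_and]
    intro h; linarith), div_one]

lemma mainBound (r δ : ℝ) (hr : 0 < r) (hδ : δ ∈ Set.Ioo (0:ℝ) 1) (R : ℝ) (hR : 2*r + 4 ≤ R) :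
    Jint r R δ {p : ℝ × ℝ | (r < |p.1| ∧ |p.1| < R) ∧ r < |p.2| ∧ |p.2| < R} ≤
      ENNReal.ofReal (1024 / Real.log R ^ (1 - δ)) := by
  have hR4 : (4:ℝ) ≤ R := by linarith
  have hrR : r < R := by linarith
  set M := 1 + R - r with hMdef
  have hM1 : 1 < M := by simp only [hMdef]; linarith
  set L := Real.log M with hLdef
  have hL0 : 0 < L := Real.log_pos hM1
  set W := 1 + Real.log (1 + 2*R) ^ δ with hWdef
  have hlog2R : (0:ℝ) ≤ Real.log (1 + 2*R) := Real.log_nonneg (by linarith)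
  have hW0 : 0 < W := by
    have : (0:ℝ) ≤ Real.log (1 + 2*R) ^ δ := Real.rpow_nonneg hlog2R δ
    simp only [hWdef]; linarith
  set A := {y : ℝ | r < |y| ∧ |y| < R} with hAdef
  have hDA : {p : ℝ × ℝ | (r < |p.1| ∧ |p.1| < R) ∧ r < |p.2| ∧ |p.2| < R} = A ×ˢ A := rfl
  -- the majorant
  set g : ℝ × ℝ → ℝ := fun p =>
    ((Real.log (1 + |p.1| - r) - Real.log (1 + |p.2| - r)) / (|p.1| - |p.2|)) ^ 2 with hgdef
  have mg0 : Measurable g := by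
    apply Measurable.pow_const
    apply Measurable.div
    · exact (Real.measurable_log.comp
        ((measurable_const.add measurable_fst.abs).sub measurable_const)).sub
        (Real.measurable_log.comp
        ((measurable_const.add measurable_snd.abs).sub measurable_const))
    · exact measurable_fst.abs.sub measurable_snd.abs
  have mgf : Measurable fun p : ℝ × ℝ => ENNReal.ofReal (g p) :=
    ENNReal.measurable_ofReal.comp mg0
  have mWg : Measurable fun p : ℝ × ℝ => ENNReal.ofReal (W/L^2 * g p) :=
    ENNReal.measurable_ofReal.comp (mg0.const_mul _)
  -- pointwise bound
  have hpoint : ∀ p ∈ A ×ˢ A,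
      ENNReal.ofReal (((phiCut r R p.1 - phiCut r R p.2) / (p.1 - p.2)) ^ 2 *
        (1 + Real.log (1 + |p.1 - p.2|) ^ δ)) ≤ ENNReal.ofReal (W/L^2 * g p) := by
    rintro ⟨x, y⟩ ⟨hx, hy⟩
    simp only [hAdef, mem_setOf_eq] at hx hy
    apply ENNReal.ofReal_le_ofReal
    set d : ℝ := Real.log (1 + |x| - r) - Real.log (1 + |y| - r) with hddef
    have hφx : phiCut r R x = 1 - Real.log (1 + |x| - r) / L := by
      rw [phiCut, if_neg (not_le.2 hx.1), if_pos hx.2]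
    have hφy : phiCut r R y = 1 - Real.log (1 + |y| - r) / L := by
      rw [phiCut, if_neg (not_le.2 hy.1), if_pos hy.2]
    have hφdiff : phiCut r R x - phiCut r R y = -d / L := by
      rw [hφx, hφy, hddef]; ring
    have hq : ((phiCut r R x - phiCut r R y) / (x - y)) ^ 2 ≤ 1/L^2 * g (x, y) := by
      have hgxy : g (x, y) = d^2 / (|x| - |y|)^2 := by
        simp only [hgdef, hddef]; rw [div_pow]
      have hlhs : ((phiCut r R x - phiCut r R y) / (x - y)) ^ 2 = d^2 / (L^2 * (x - y)^2) := by
        rw [hφdiff, neg_div, neg_div, neg_sq, div_div, div_pow, mul_pow]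
      rw [hlhs, hgxy]
      by_cases hst : |x| = |y|
      · have hd0 : d = 0 := by rw [hddef, hst, sub_self]
        simp [hd0]
      · have hst2 : (0:ℝ) < (|x| - |y|)^2 :=
          lt_of_le_of_ne (sq_nonneg _) (Ne.symm (pow_ne_zero 2 (sub_ne_zero.2 hst)))
        have hxy2 : (|x| - |y|)^2 ≤ (x - y)^2 := by
          have h1 : |(|x| - |y|)| ≤ |x - y| := abs_abs_sub_abs_le_abs_sub x y
          calc (|x| - |y|)^2 = |(|x| - |y|)|^2 := (sq_abs _).symm
            _ ≤ |x - y|^2 := by gcongr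
            _ = (x - y)^2 := sq_abs _
        calc d^2 / (L^2 * (x - y)^2) ≤ d^2 / (L^2 * (|x| - |y|)^2) := by
              apply div_le_div_of_nonneg_left (sq_nonneg d) (mul_pos (by positivity) hst2)
              exact mul_le_mul_of_nonneg_left hxy2 (sq_nonneg L)
          _ = 1/L^2 * (d^2 / (|x| - |y|)^2) := by
              rw [one_div_mul_eq_div, div_div, mul_comm ((|x| - |y|)^2) (L^2)]
    have hw1 : (0:ℝ) ≤ 1 + Real.log (1 + |x - y|) ^ δ := by
      have : (0:ℝ) ≤ Real.log (1 + |x - y|) ^ δ :=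
        Real.rpow_nonneg (Real.log_nonneg (by linarith [abs_nonneg (x - y)])) δ
      linarith
    have hw2 : 1 + Real.log (1 + |x - y|) ^ δ ≤ W := by
      have hxy2R : |x - y| ≤ 2 * R := by
        calc |x - y| = |x + -y| := by ring_nf
          _ ≤ |x| + |-y| := abs_add_le x (-y)
          _ = |x| + |y| := by rw [abs_neg]
          _ ≤ 2 * R := by linarith [hx.2, hy.2]
      have : Real.log (1 + |x - y|) ^ δ ≤ Real.log (1 + 2*R) ^ δ := by
        apply Real.rpow_le_rpow (Real.log_nonneg (by linarith [abs_nonneg (x - y)]))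
          (Real.log_le_log (by linarith [abs_nonneg (x - y)]) (by linarith)) hδ.1.le
      simp only [hWdef]; linarith
    calc ((phiCut r R x - phiCut r R y) / (x - y)) ^ 2 * (1 + Real.log (1 + |x - y|) ^ δ)
        ≤ (1/L^2 * g (x, y)) * W := by
          apply mul_le_mul hq hw2 hw1
          have : (0:ℝ) ≤ g (x, y) := by simp only [hgdef]; positivity
          positivity
      _ = W/L^2 * g (x, y) := by ring
  -- inner integral bound
  have hinner : ∀ x ∈ A, (∫⁻ y in A, ENNReal.ofReal (g (x, y))) ≤
      ENNReal.ofReal (64 / (1 + |x| - r)) := by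
    intro x hx
    simp only [hAdef, mem_setOf_eq] at hx
    set a : ℝ := 1 + |x| - r with hadef
    have ha1 : 1 < a := by simp only [hadef]; linarith [hx.1]
    have haM : a < M := by simp only [hadef, hMdef]; linarith [hx.2]
    set h : ℝ → ℝ≥0∞ := fun t =>
      ENNReal.ofReal (((Real.log (1 + |x| - r) - Real.log (1 + t - r)) / (|x| - t)) ^ 2)
      with hhdef
    have mh : Measurable h := by
      apply ENNReal.measurable_ofReal.comp
      apply Measurable.pow_const
      exact (measurable_const.sub (Real.measurable_log.comp
        ((measurable_const.add measurable_id).sub measurable_const))).div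
        (measurable_const.sub measurable_id)
    have hshape : (∫⁻ y in A, ENNReal.ofReal (g (x, y))) = ∫⁻ y in A, h |y| := rfl
    rw [hshape, hAdef, absReduce r R hr h mh, shiftReduce (r - 1) r R h mh]
    have he1 : r - (r - 1) = 1 := by ring
    have he2 : R - (r - 1) = M := by rw [hMdef]; ring
    rw [he1, he2]
    have hcong : ∫⁻ v in Ioo 1 M, h (v + (r - 1)) =
        ∫⁻ v in Ioo 1 M, ENNReal.ofReal (((Real.log v - Real.log a) / (v - a)) ^ 2) := by
      apply setLIntegral_congr_fun measurableSet_Ioo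
      intro v _
      simp only [hhdef]
      congr 1
      rw [show 1 + (v + (r - 1)) - r = v by ring, show |x| - (v + (r - 1)) = a - v by
        rw [hadef]; ring]
      rw [show Real.log (1 + |x| - r) - Real.log v = -(Real.log v - Real.log a) by
        rw [hadef]; ring, show a - v = -(v - a) by ring, neg_div_neg_eq]
    rw [hcong]
    calc 2 * ∫⁻ v in Ioo 1 M, ENNReal.ofReal (((Real.log v - Real.log a) / (v - a)) ^ 2)
        ≤ 2 * ENNReal.ofReal (32/a) := by
          gcongr
          exact key1D M a ha1 haM
      _ = ENNReal.ofReal (64/a) := by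
          rw [← ENNReal.ofReal_ofNat 2, ← ENNReal.ofReal_mul (by norm_num)]
          congr 1
          ring
  -- outer integral
  have houter : (∫⁻ x in A, ENNReal.ofReal (64 / (1 + |x| - r))) =
      ENNReal.ofReal (128 * L) := by
    set h2 : ℝ → ℝ≥0∞ := fun t => ENNReal.ofReal (64 / (1 + t - r)) with hh2def
    have mh2 : Measurable h2 :=
      ENNReal.measurable_ofReal.comp (measurable_const.div
        ((measurable_const.add measurable_id).sub measurable_const))
    have hshape : (∫⁻ x in A, ENNReal.ofReal (64 / (1 + |x| - r))) = ∫⁻ x in A, h2 |x| := rfl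
    rw [hshape, hAdef, absReduce r R hr h2 mh2, shiftReduce (r - 1) r R h2 mh2]
    have he1 : r - (r - 1) = 1 := by ring
    have he2 : R - (r - 1) = M := by rw [hMdef]; ring
    rw [he1, he2]
    have hcong : ∫⁻ v in Ioo 1 M, h2 (v + (r - 1)) =
        ∫⁻ v in Ioo 1 M, ENNReal.ofReal (64 / v) := by
      apply setLIntegral_congr_fun measurableSet_Ioo
      intro v _
      simp only [hh2def]
      rw [show 1 + (v + (r - 1)) - r = v by ring]
    rw [hcong, intOne M 64 hM1 (by norm_num)]
    rw [← ENNReal.ofReal_ofNat 2, ← ENNReal.ofReal_mul (by norm_num)]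
    congr 1
    rw [hLdef]; ring
  -- assemble
  have hmain : Jint r R δ (A ×ˢ A) ≤ ENNReal.ofReal (W/L^2) * ENNReal.ofReal (128 * L) := by
    calc Jint r R δ (A ×ˢ A)
        ≤ ∫⁻ p in A ×ˢ A, ENNReal.ofReal (W/L^2 * g p) := by
          rw [Jint]
          exact setLIntegral_mono mWg hpoint
      _ = ∫⁻ p in A ×ˢ A, ENNReal.ofReal (W/L^2) * ENNReal.ofReal (g p) := by
          congr 1
          ext p
          rw [← ENNReal.ofReal_mul (by positivity)]
      _ = ENNReal.ofReal (W/L^2) * ∫⁻ p in A ×ˢ A, ENNReal.ofReal (g p) :=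
          lintegral_const_mul' _ _ ENNReal.ofReal_ne_top
      _ = ENNReal.ofReal (W/L^2) * ∫⁻ x in A, ∫⁻ y in A, ENNReal.ofReal (g (x, y)) := by
          rw [prodSplit A _ mgf]
      _ ≤ ENNReal.ofReal (W/L^2) * ∫⁻ x in A, ENNReal.ofReal (64 / (1 + |x| - r)) := by
          apply mul_le_mul' le_rfl
          exact setLIntegral_mono (ENNReal.measurable_ofReal.comp (measurable_const.div
            ((measurable_const.add measurable_id.abs).sub measurable_const))) hinner
      _ = ENNReal.ofReal (W/L^2) * ENNReal.ofReal (128 * L) := by rw [houter]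
  rw [hDA]
  refine le_trans hmain ?_
  rw [← ENNReal.ofReal_mul (by positivity)]
  apply ENNReal.ofReal_le_ofReal
  -- final numeric bound
  have hlogR1 : 1 ≤ Real.log R := by
    rw [Real.le_log_iff_exp_le (by linarith)]
    have := Real.exp_one_lt_d9
    linarith
  have hlogR0 : 0 < Real.log R := by linarith
  have hW4 : W ≤ 4 * Real.log R ^ δ := by
    have h3 : Real.log (1 + 2*R) ≤ 3 * Real.log R := by
      have hcube : 1 + 2*R ≤ R^3 := by nlinarith [sq_nonneg (R - 1), sq_nonneg R, hR4]
      have : Real.log (1 + 2*R) ≤ Real.log (R^3) := Real.log_le_log (by linarith) hcube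
      rwa [Real.log_pow] at this
      -- note: log_pow : log (x ^ n) = n * log x, so Real.log (R^3) = 3 * log R
    have h4 : Real.log (1 + 2*R) ^ δ ≤ (3 * Real.log R) ^ δ :=
      Real.rpow_le_rpow hlog2R h3 hδ.1.le
    have h5 : (3 * Real.log R) ^ δ = 3 ^ δ * Real.log R ^ δ :=
      Real.mul_rpow (by norm_num) hlogR0.le
    have h6 : (3:ℝ) ^ δ ≤ 3 := by
      calc (3:ℝ) ^ δ ≤ (3:ℝ) ^ (1:ℝ) :=
        Real.rpow_le_rpow_of_exponent_le (by norm_num) hδ.2.le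
        _ = 3 := Real.rpow_one 3
    have h7 : (1:ℝ) ≤ Real.log R ^ δ := by
      calc (1:ℝ) = (1:ℝ) ^ δ := (Real.one_rpow δ).symm
        _ ≤ Real.log R ^ δ := Real.rpow_le_rpow (by norm_num) hlogR1 hδ.1.le
    have h8 : (0:ℝ) ≤ Real.log R ^ δ := by linarith
    simp only [hWdef]
    nlinarith
  have hL2 : Real.log R ≤ 2 * L := by
    have hsq : Real.sqrt R ≤ M := by
      have h1 : Real.sqrt R ≤ R/2 := by
        have : Real.sqrt R ≤ Real.sqrt ((R/2)^2) := Real.sqrt_le_sqrt (by nlinarith)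
        rwa [Real.sqrt_sq (by linarith)] at this
      simp only [hMdef]; linarith
    have h2 : Real.log (Real.sqrt R) ≤ L := by
      rw [hLdef]
      exact Real.log_le_log (Real.sqrt_pos.2 (by linarith)) hsq
    rw [Real.log_sqrt (by linarith)] at h2
    linarith
  calc W/L^2 * (128 * L) = 128 * W / L := by field_simp
    _ ≤ 128 * (4 * Real.log R ^ δ) / (Real.log R / 2) := by
        apply div_le_div₀ (by positivity) (by nlinarith) (by positivity) (by linarith)
    _ = 1024 * (Real.log R ^ δ / Real.log R) := by field_simp; ring
    _ = 1024 / Real.log R ^ (1 - δ) := by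
        rw [div_eq_mul_inv (1024:ℝ), ← Real.rpow_neg hlogR0.le, show -(1-δ) = δ - 1 by ring,
          Real.rpow_sub hlogR0, Real.rpow_one]


/-- For fixed `0 < r` and `δ ∈ (0,1)`, the integral `J_{R,1}` of
`[(φ^{(r,R)}(x)-φ^{(r,R)}(y))/(x-y)]² [1 + log^δ(1+|x-y|)]` over
`D₁(r,R) = {r < |x| < R, r < |y| < R}` satisfies `J_{R,1} ≤ C / (log R)^{1-δ}` for
some `C > 0` and all `R ≥ R₀ > r`; in particular `J_{R,1} → 0` as `R → ∞`. -/
theorem stmt15 (r δ : ℝ) (hr : 0 < r) (hδ : δ ∈ Set.Ioo (0 : ℝ) 1) :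
    (∃ C > (0 : ℝ), ∃ R₀ > r, ∀ R ≥ R₀,
        Jint r R δ {p : ℝ × ℝ | (r < |p.1| ∧ |p.1| < R) ∧ r < |p.2| ∧ |p.2| < R} ≤
          ENNReal.ofReal (C / Real.log R ^ (1 - δ))) ∧
      Filter.Tendsto
        (fun R : ℝ =>
          Jint r R δ {p : ℝ × ℝ | (r < |p.1| ∧ |p.1| < R) ∧ r < |p.2| ∧ |p.2| < R})
        Filter.atTop (nhds 0) := by
  constructor
  · exact ⟨1024, by norm_num, 2*r + 4, by linarith, fun R hR => mainBound r δ hr hδ R hR⟩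
  · have hb : Filter.Tendsto (fun R : ℝ => ENNReal.ofReal (1024 / Real.log R ^ (1 - δ)))
        Filter.atTop (nhds 0) := by
      have h1 : Filter.Tendsto (fun R : ℝ => Real.log R ^ (1 - δ)) Filter.atTop Filter.atTop :=
        (tendsto_rpow_atTop (by linarith [hδ.2] : (0:ℝ) < 1 - δ)).comp
          Real.tendsto_log_atTop
      have h2 : Filter.Tendsto (fun R : ℝ => 1024 / Real.log R ^ (1 - δ))
          Filter.atTop (nhds 0) := Filter.Tendsto.div_atTop tendsto_const_nhds h1
      have h3 := (ENNReal.continuous_ofReal.tendsto 0).comp h2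
      simpa [Function.comp_def] using h3
    apply tendsto_of_tendsto_of_tendsto_of_le_of_le' tendsto_const_nhds hb
    · exact Filter.Eventually.of_forall fun R => bot_le
    · filter_upwards [Filter.eventually_ge_atTop (2*r + 4)] with R hR
      exact mainBound r δ hr hδ R hR
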